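/- Let 0<γ<1, K>0, a>0, r>0. If (a²γ)/(2(1−γ)) − r ≤ −rγ, then for all x>0 the function U(x) = (1/γ)(x+K)^γ satisfies −(a²/(2(1−γ)))(x+K)^γ − r x (x+K)^{γ−1} + (r/γ)(x+K)^γ ≥ 0. -/
import Mathlib


theorem stmt_0 (γ K a r : ℝ) (hγ : 0 < γ) (hγ1 : γ < 1) (hK : 0 < K)
    (ha : 0 < a) (hr : 0 < r)
    (hcond : a ^ 2 * γ / (2 * (1 - γ)) - r ≤ -r * γ) :
    ∀ x : ℝ, 0 < x →
      -(a ^ 2 / (2 * (1 - γ))) * (x + K) ^ γ - r * x * (x + K) ^ (γ - 1)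
        + (r / γ) * (x + K) ^ γ ≥ 0 := by
  intro x hx
  have hy : 0 < x + K := by linarith
  have h1γ : 0 < 1 - γ := by linarith
  have h1 : (x + K) ^ (γ - 1) = (x + K) ^ γ / (x + K) := by
    rw [Real.rpow_sub hy, Real.rpow_one]
  have hyp : 0 < (x + K) ^ γ := Real.rpow_pos_of_pos hy γ
  rw [h1]
  have key : -(a ^ 2 / (2 * (1 - γ))) - r * (x / (x + K)) + r / γ ≥ 0 := by
    have hx1 : x / (x + K) ≤ 1 := by
      rw [div_le_one hy]; linarith
    have h2 : r * (x / (x + K)) ≤ r := by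
      calc r * (x / (x + K)) ≤ r * 1 := by
            exact mul_le_mul_of_nonneg_left hx1 hr.le
        _ = r := mul_one r
    have h3 : a ^ 2 / (2 * (1 - γ)) + r ≤ r / γ := by
      rw [div_add' _ _ _ (by positivity : (2 * (1 - γ)) ≠ 0),
        div_le_div_iff₀ (by positivity) hγ]
      have hc : a ^ 2 * γ / (2 * (1 - γ)) ≤ r - r * γ := by linarith
      rw [div_le_iff₀ (by positivity : (0:ℝ) < 2 * (1 - γ))] at hc
      nlinarith [hc]
    linarith
  have heq : -(a ^ 2 / (2 * (1 - γ))) * (x + K) ^ γ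
      - r * x * ((x + K) ^ γ / (x + K)) + r / γ * (x + K) ^ γ
      = (x + K) ^ γ * (-(a ^ 2 / (2 * (1 - γ))) - r * (x / (x + K)) + r / γ) := by
    ring
  rw [heq]
  exact mul_nonneg hyp.le key
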